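/- arXiv:2106.05090 — 3 statements merged into one kernel-verified Lean document; each statement's English description precedes it below -/
import Mathlib

section
/- The space H_n of homogeneous polynomials of degree n in two variables decomposes as the direct sum of the span of x^n and the image of T_n; equivalently, for every q ∈ H_n there exists p ∈ H_n and α ∈ ℝ such that T_n(p) + q = α·x^n. -/
open MvPolynomial

lemma degree_fin2 (d : Fin 2 →₀ ℕ) : d.degree = d 0 + d 1 := by
  rw [Finsupp.degree_apply, Finset.sum_subset (Finset.subset_univ _)
    (by intro i _ hi; simpa using Finsupp.notMem_support_iff.mp hi), Fin.sum_univ_two]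

lemma mono_case (n : ℕ) (d : Fin 2 →₀ ℕ) (c : ℝ) (hd : d 0 + d 1 = n) :
    ∃ p : MvPolynomial (Fin 2) ℝ, p.IsHomogeneous n ∧
      ∃ α : ℝ, (X 1 : MvPolynomial (Fin 2) ℝ) * pderiv 0 p + monomial d c
        = α • (X 0 : MvPolynomial (Fin 2) ℝ) ^ n := by
  rcases Nat.eq_zero_or_pos (d 1) with h1 | h1
  · refine ⟨0, isHomogeneous_zero _ _ _, c, ?_⟩
    have hdeq : d = Finsupp.single 0 n := by
      ext i
      fin_cases i <;> simp [h1, ← hd, h1]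
    rw [hdeq, map_zero, mul_zero, zero_add, X_pow_eq_monomial, smul_monomial, smul_eq_mul, mul_one]
  · set e : Fin 2 →₀ ℕ := d + Finsupp.single 0 1 - Finsupp.single 1 1 with he
    have he0 : e 0 = d 0 + 1 := by simp [he]
    have he1 : e 1 = d 1 - 1 := by simp [he]
    refine ⟨monomial e (-c / (d 0 + 1)), isHomogeneous_monomial _ ?_, 0, ?_⟩
    · rw [degree_fin2, he0, he1]; omega
    · rw [pderiv_monomial, zero_smul]
      have hes : e - Finsupp.single 0 1 = d - Finsupp.single 1 1 := by
        ext i; fin_cases i <;> simp [he0, he1] <;> try omega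
      rw [hes, he0]
      have hX : (X 1 : MvPolynomial (Fin 2) ℝ) = monomial (Finsupp.single 1 1) 1 := by
        rfl
      rw [hX, monomial_mul]
      have hdd : Finsupp.single 1 1 + (d - Finsupp.single 1 1) = d := by
        ext i; fin_cases i <;> simp <;> try omega
      have hx : ((d 0 : ℝ) + 1) ≠ 0 := by positivity
      have hc : (1 : ℝ) * (-c / (↑(d 0) + 1) * ↑(d 0 + 1)) + c = 0 := by
        push_cast; field_simp; ring
      rw [hdd, ← map_add, hc, map_zero]

/-- `H_n = span{x^n} ⊕ Im T_n`: for every homogeneous `q` of degree `n` there is a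
homogeneous `p` of degree `n` and `α : ℝ` with `T_n(p) + q = α • x^n`. -/
theorem span_xn_plus_image_Tn (n : ℕ) (q : MvPolynomial (Fin 2) ℝ)
    (hq : q.IsHomogeneous n) :
    ∃ p : MvPolynomial (Fin 2) ℝ, p.IsHomogeneous n ∧
      ∃ α : ℝ, (X 1 : MvPolynomial (Fin 2) ℝ) * pderiv 0 p + q
        = α • (X 0 : MvPolynomial (Fin 2) ℝ) ^ n := by
  induction q using AddMonoidAlgebra.induction with
  | zero => exact ⟨0, isHomogeneous_zero _ _ _, 0, by simp⟩
  | single_add d c f hdf hc ih =>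
    rw [single_eq_monomial] at hq ⊢
    classical
    have hq' : IsHomogeneous f n := by
      intro d' hd'
      have hne : d' ≠ d := by
        intro h; exact hdf (by rw [← h]; exact MvPolynomial.mem_support_iff.mpr hd')
      apply hq
      rw [coeff_add, coeff_monomial, if_neg (fun h => hne h.symm), zero_add]
      exact hd'
    obtain ⟨p1, hp1, α1, h1⟩ := ih hq'
    have hdeg : d 0 + d 1 = n := by
      rw [← degree_fin2, Finsupp.degree_eq_weight_one]
      apply hq
      rw [coeff_add, coeff_monomial, if_pos rfl,
        MvPolynomial.notMem_support_iff.mp hdf, add_zero]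
      exact hc
    obtain ⟨p2, hp2, α2, h2⟩ := mono_case n d c hdeg
    refine ⟨p1 + p2, hp1.add hp2, α1 + α2, ?_⟩
    rw [map_add, mul_add, add_smul, ← h1, ← h2]
    ring
end

section
/- For n odd and (Cs, Sn) the generalized trigonometric functions with period T, the function G(θ) = Cs(θ)^{n−1} / (n·(1 − (n−1)·Sn(θ)^2)) is nonnegative, continuous, not identically zero, and its integral over [0, T] is strictly positive. -/
open MeasureTheory Set Function

/-- For `n` odd, `G θ = Cs θ^(n−1) / (n(1 − (n−1)Sn θ²))` is nonnegative, continuous,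
not identically zero, and has strictly positive integral over `[0, T]`. -/
theorem G_nonneg_and_integral_pos (n : ℕ) (hn : 1 ≤ n) (hodd : Odd n) (Cs Sn : ℝ → ℝ)
    (hCs : ∀ θ, HasDerivAt Cs (-(Sn θ)) θ)
    (hSn : ∀ θ, HasDerivAt Sn (Cs θ ^ (2 * n - 1)) θ)
    (hCs0 : Cs 0 = 1) (hSn0 : Sn 0 = 0)
    (T : ℝ) (hT : 0 < T)
    (hCsper : Function.Periodic Cs T) (hSnper : Function.Periodic Sn T) :
    (∀ θ : ℝ, 0 ≤ Cs θ ^ (n - 1) / ((n : ℝ) * (1 - ((n : ℝ) - 1) * Sn θ ^ 2)))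
    ∧ Continuous (fun θ : ℝ => Cs θ ^ (n - 1) / ((n : ℝ) * (1 - ((n : ℝ) - 1) * Sn θ ^ 2)))
    ∧ (∃ θ : ℝ, Cs θ ^ (n - 1) / ((n : ℝ) * (1 - ((n : ℝ) - 1) * Sn θ ^ 2)) ≠ 0)
    ∧ 0 < ∫ θ in (0 : ℝ)..T, Cs θ ^ (n - 1) / ((n : ℝ) * (1 - ((n : ℝ) - 1) * Sn θ ^ 2)) := by
  have hn0 : (0 : ℝ) < n := by exact_mod_cast hn.trans_lt' (by norm_num)
  -- the energy identity Cs^{2n} + n Sn^2 = 1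
  have hE : ∀ θ : ℝ, Cs θ ^ (2 * n) + (n : ℝ) * Sn θ ^ 2 = 1 := by
    have hderiv : ∀ θ : ℝ,
        HasDerivAt (fun θ => Cs θ ^ (2 * n) + (n : ℝ) * Sn θ ^ 2) 0 θ := by
      intro θ
      have h1 := ((hCs θ).fun_pow (2 * n))
      have h2 := ((hSn θ).fun_pow 2).const_mul (n : ℝ)
      have := h1.fun_add h2
      refine this.congr_deriv ?_
      have h2n : 1 ≤ 2 * n := by omega
      push_cast
      ring
    have hconst : ∀ θ : ℝ, (fun θ => Cs θ ^ (2 * n) + (n : ℝ) * Sn θ ^ 2) θ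
        = (fun θ => Cs θ ^ (2 * n) + (n : ℝ) * Sn θ ^ 2) 0 := by
      intro θ
      exact is_const_of_deriv_eq_zero (fun x => (hderiv x).differentiableAt)
        (fun x => (hderiv x).deriv) θ 0
    intro θ
    have := hconst θ
    simp only [hCs0, hSn0] at this
    simpa using this
  -- denominator positivity
  have hden : ∀ θ : ℝ, 0 < 1 - ((n : ℝ) - 1) * Sn θ ^ 2 := by
    intro θ
    have hkey : 1 - ((n : ℝ) - 1) * Sn θ ^ 2 = Cs θ ^ (2 * n) + Sn θ ^ 2 := by
      have := hE θ; nlinarith [this]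
    rw [hkey]
    rcases eq_or_ne (Cs θ) 0 with h | h
    · have hSnne : Sn θ ≠ 0 := by
        intro hs
        have := hE θ
        rw [h, hs] at this
        rw [zero_pow (by omega : 2 * n ≠ 0)] at this
        norm_num at this
      rw [h, zero_pow (by omega : 2 * n ≠ 0), zero_add]
      nlinarith [sq_abs (Sn θ), abs_pos.mpr hSnne, sq_nonneg (|Sn θ| - 1)]
    · have h1 : 0 < Cs θ ^ (2 * n) := (even_two_mul n).pow_pos h
      nlinarith [sq_nonneg (Sn θ)]
  have hdenn : ∀ θ : ℝ, 0 < (n : ℝ) * (1 - ((n : ℝ) - 1) * Sn θ ^ 2) :=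
    fun θ => mul_pos hn0 (hden θ)
  have heven : Even (n - 1) := Nat.Odd.sub_odd hodd odd_one
  have hnum : ∀ θ : ℝ, 0 ≤ Cs θ ^ (n - 1) := fun θ => heven.pow_nonneg _
  have hnonneg : ∀ θ : ℝ, 0 ≤ Cs θ ^ (n - 1) / ((n : ℝ) * (1 - ((n : ℝ) - 1) * Sn θ ^ 2)) :=
    fun θ => div_nonneg (hnum θ) (hdenn θ).le
  have hCscont : Continuous Cs :=
    (Differentiable.continuous fun x => (hCs x).differentiableAt)
  have hSncont : Continuous Sn :=
    (Differentiable.continuous fun x => (hSn x).differentiableAt)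
  have hcont : Continuous (fun θ : ℝ => Cs θ ^ (n - 1) / ((n : ℝ) * (1 - ((n : ℝ) - 1) * Sn θ ^ 2))) := by
    apply Continuous.div
    · exact hCscont.pow _
    · continuity
    · exact fun θ => (hdenn θ).ne'
  have hg0 : Cs 0 ^ (n - 1) / ((n : ℝ) * (1 - ((n : ℝ) - 1) * Sn 0 ^ 2)) = 1 / n := by
    simp [hCs0, hSn0]
  refine ⟨hnonneg, hcont, ⟨0, by rw [hg0]; positivity⟩, ?_⟩
  set g := fun θ : ℝ => Cs θ ^ (n - 1) / ((n : ℝ) * (1 - ((n : ℝ) - 1) * Sn θ ^ 2)) with hg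
  have hgi : IntervalIntegrable g volume 0 T := hcont.intervalIntegrable 0 T
  rw [intervalIntegral.integral_pos_iff_support_of_nonneg_ae
    (Filter.Eventually.of_forall hnonneg) hgi]
  refine ⟨hT, ?_⟩
  -- g is positive near 0
  have hg0' : 0 < g 0 := by
    show 0 < Cs 0 ^ (n - 1) / ((n : ℝ) * (1 - ((n : ℝ) - 1) * Sn 0 ^ 2))
    rw [hg0]; positivity
  have hev : ∀ᶠ x in nhds (0 : ℝ), 0 < g x :=
    (hcont.tendsto 0).eventually (eventually_gt_nhds hg0')
  rw [Metric.eventually_nhds_iff] at hev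
  obtain ⟨δ, hδ, hδpos⟩ := hev
  have hsub : Ioo 0 (min δ T) ⊆ support g ∩ Ioc 0 T := by
    intro x hx
    obtain ⟨hx0, hx1⟩ := hx
    constructor
    · have : dist x 0 < δ := by
        rw [Real.dist_eq, sub_zero, abs_of_pos hx0]
        exact hx1.trans_le (min_le_left _ _)
      exact (hδpos this).ne'
    · exact ⟨hx0, (hx1.trans_le (min_le_right _ _)).le⟩
  calc (0 : ENNReal) < volume (Ioo 0 (min δ T)) := by
        rw [Real.volume_Ioo]
        simp [lt_min hδ hT, hδ, hT]
    _ ≤ volume (support g ∩ Ioc 0 T) := measure_mono hsub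
end

section
/- For the generalized trigonometric functions with period T, the integral from 0 to T of Cs(θ)^{3n+1} dθ equals (n+2) times the integral from 0 to T of Cs(θ)^{n+1}·Sn(θ)^2 dθ. -/
/-- `∫₀^T Cs^(3n+1) = (n+2) · ∫₀^T Cs^(n+1) Sn²`. -/
theorem integral_Cs_pow_eq (n : ℕ) (hn : 1 ≤ n) (Cs Sn : ℝ → ℝ)
    (hCs : ∀ θ, HasDerivAt Cs (-(Sn θ)) θ)
    (hSn : ∀ θ, HasDerivAt Sn (Cs θ ^ (2 * n - 1)) θ)
    (hCs0 : Cs 0 = 1) (hSn0 : Sn 0 = 0)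
    (T : ℝ) (hT : 0 < T)
    (hCsper : Function.Periodic Cs T) (hSnper : Function.Periodic Sn T) :
    ∫ θ in (0 : ℝ)..T, Cs θ ^ (3 * n + 1)
      = ((n : ℝ) + 2) * ∫ θ in (0 : ℝ)..T, Cs θ ^ (n + 1) * Sn θ ^ 2 := by
  obtain ⟨k, rfl⟩ : ∃ k, n = k + 1 := ⟨n - 1, (Nat.succ_pred_eq_of_pos hn).symm⟩
  have hCsc : Continuous Cs := Differentiable.continuous (fun θ => (hCs θ).differentiableAt)
  have hSnc : Continuous Sn := by
    have : Differentiable ℝ Sn := fun θ => (hSn θ).differentiableAt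
    exact this.continuous
  have hF : ∀ θ, HasDerivAt (fun θ => Cs θ ^ (k + 3) * Sn θ)
      (Cs θ ^ (3 * (k + 1) + 1) - ((k : ℝ) + 1 + 2) * (Cs θ ^ (k + 1 + 1) * Sn θ ^ 2)) θ := by
    intro θ
    have h : HasDerivAt (fun θ => Cs θ ^ (k + 3) * Sn θ) _ θ := ((hCs θ).pow (k + 3)).mul (hSn θ)
    convert h using 1
    have h2 : 2 * (k + 1) - 1 = 2 * k + 1 := by omega
    have h3 : 3 * (k + 1) + 1 = (k + 3) + (2 * k + 1) := by omega
    rw [h2, h3, pow_add, Pi.pow_apply]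
    push_cast
    ring
  have hcont : Continuous fun θ => Cs θ ^ (3 * (k + 1) + 1)
      - ((k : ℝ) + 1 + 2) * (Cs θ ^ (k + 1 + 1) * Sn θ ^ 2) := by
    continuity
  have key : ∫ θ in (0:ℝ)..T, (Cs θ ^ (3 * (k + 1) + 1)
      - ((k : ℝ) + 1 + 2) * (Cs θ ^ (k + 1 + 1) * Sn θ ^ 2))
      = Cs T ^ (k + 3) * Sn T - Cs 0 ^ (k + 3) * Sn 0 := by
    exact intervalIntegral.integral_eq_sub_of_hasDerivAt (fun θ _ => hF θ)
      (hcont.intervalIntegrable 0 T)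
  have hSnT : Sn T = 0 := by
    have := hSnper 0
    simpa [hSn0] using this
  rw [hSnT, hSn0] at key
  simp only [mul_zero, sub_zero] at key
  rw [intervalIntegral.integral_sub ((by continuity : Continuous fun θ => Cs θ ^ (3 * (k+1) + 1)).intervalIntegrable 0 T)
      ((by continuity : Continuous fun θ => ((k:ℝ) + 1 + 2) * (Cs θ ^ (k + 1 + 1) * Sn θ ^ 2)).intervalIntegrable 0 T)] at key
  rw [intervalIntegral.integral_const_mul] at key
  push_cast
  linarith [key]
end
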